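/- arXiv:0807.2648 — 2 statements merged into one kernel-verified Lean document; each statement's English description precedes it below -/
import Mathlib

section
/- For a double-integrator robot with speed bound v_max > 0 and acceleration bound u_max > 0, starting from any configuration g = (p, v) ∈ ℝ² × ℝ² with ‖v‖ = v₀ ≤ v_max, the two-dimensional Lebesgue measure of the reachable set satisfies Area(R_t(g)) ≤ 2 v₀ u_max t³ + u_max² t⁴ for every t ≥ 0. (In particular, for v₀ = 0 one has Area(R_t(g)) ≤ u_max² t⁴.) -/
open MeasureTheory Filter Topology Real

noncomputable section

/-- The plane `ℝ²` with the Euclidean norm. -/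
abbrev Plane : Type := EuclideanSpace ℝ (Fin 2)

/-- A double-integrator (DI) trajectory with speed bound `vmax` and acceleration bound
`umax`: a twice continuously differentiable curve in the plane whose velocity and
acceleration are bounded by `vmax` and `umax` respectively. -/
def IsDITraj (vmax umax : ℝ) (x : ℝ → Plane) : Prop :=
  ContDiff ℝ 2 x ∧ (∀ t, ‖deriv x t‖ ≤ vmax) ∧ (∀ t, ‖deriv (deriv x) t‖ ≤ umax)

/-- Minimum travel time of a DI robot from configuration `(p, v)` to the point `q`. -/
def tauDI (vmax umax : ℝ) (p v q : Plane) : ℝ :=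
  sInf {T : ℝ | 0 ≤ T ∧ ∃ x : ℝ → Plane, IsDITraj vmax umax x ∧
    x 0 = p ∧ deriv x 0 = v ∧ x T = q}

/-- Reachable set at time `t` of a DI robot starting at configuration `(p, v)`. -/
def reachDI (vmax umax : ℝ) (p v : Plane) (t : ℝ) : Set Plane :=
  {q | tauDI vmax umax p v q ≤ t}

open Set Function

namespace DIAux

/-- smooth bump-like profile: 1 at 0, vanishing outside [-1,1], values in [0,1] -/
def g (s : ℝ) : ℝ := Real.smoothTransition (s + 1) * Real.smoothTransition (1 - s)

lemma contDiff_g {n : ℕ∞} : ContDiff ℝ n g :=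
  (Real.smoothTransition.contDiff.comp (contDiff_id.add contDiff_const)).mul
    (Real.smoothTransition.contDiff.comp (contDiff_const.sub contDiff_id))

lemma g_nonneg (s : ℝ) : 0 ≤ g s :=
  mul_nonneg (Real.smoothTransition.nonneg _) (Real.smoothTransition.nonneg _)

lemma g_le_one (s : ℝ) : g s ≤ 1 :=
  mul_le_one₀ (Real.smoothTransition.le_one _) (Real.smoothTransition.nonneg _)
    (Real.smoothTransition.le_one _)

lemma g_zero : g 0 = 1 := by
  simp [g, Real.smoothTransition.one_of_one_le le_rfl]

lemma g_eq_zero_of_one_le {s : ℝ} (hs : 1 ≤ s) : g s = 0 := by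
  have : (1 : ℝ) - s ≤ 0 := by linarith
  simp [g, Real.smoothTransition.zero_of_nonpos this]

lemma deriv_g_eq_zero_of_one_le {s : ℝ} (hs : 1 ≤ s) : deriv g s = 0 := by
  rcases eq_or_lt_of_le hs with h | h
  · subst h
    have hmin : IsLocalMin g 1 := Filter.Eventually.of_forall fun y => by
      rw [g_eq_zero_of_one_le le_rfl]; exact g_nonneg y
    exact hmin.deriv_eq_zero
  · have hev : g =ᶠ[𝓝 s] fun _ => 0 := by
      filter_upwards [Ioi_mem_nhds h] with y hy using g_eq_zero_of_one_le (le_of_lt hy)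
    rw [hev.deriv_eq, deriv_const]

/-- integrated profile -/
def h (t : ℝ) : ℝ := ∫ s in (0:ℝ)..t, g s

lemma hasDerivAt_h (t : ℝ) : HasDerivAt h (g t) t :=
  ((contDiff_g (n := 0)).continuous.integral_hasStrictDerivAt 0 t).hasDerivAt

lemma h_zero : h 0 = 0 := intervalIntegral.integral_same

lemma h_eq_of_one_le {s : ℝ} (hs : 1 ≤ s) : h s = h 1 := by
  have hint : ∀ a b : ℝ, IntervalIntegrable g volume a b := fun a b =>
    (contDiff_g (n := 0)).continuous.intervalIntegrable a b
  have : h s - h 1 = ∫ x in (1:ℝ)..s, g x := by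
    rw [h, h, ← intervalIntegral.integral_interval_sub_left (hint 0 s) (hint 0 1)]
  have hz : (∫ x in (1:ℝ)..s, g x) = 0 := by
    rw [intervalIntegral.integral_congr (g := fun _ => (0:ℝ)) ?_, intervalIntegral.integral_zero]
    intro x hx
    rw [Set.uIcc_of_le hs] at hx
    exact g_eq_zero_of_one_le hx.1
  linarith [this, hz]

lemma contDiff_h : ContDiff ℝ 2 h := by
  have h21 : ((1:WithTop ℕ∞) + 1) = 2 := by norm_num
  rw [← h21, contDiff_succ_iff_deriv]
  refine ⟨fun t => (hasDerivAt_h t).differentiableAt, by simp, ?_⟩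
  have : deriv h = g := funext fun t => (hasDerivAt_h t).deriv
  rw [this]
  exact contDiff_g

lemma deriv_rho_eq_zero_of_neg {s : ℝ} (hs : s < 0) : deriv Real.smoothTransition s = 0 := by
  have hev : Real.smoothTransition =ᶠ[𝓝 s] fun _ => 0 := by
    filter_upwards [Iio_mem_nhds hs] with y hy using
      Real.smoothTransition.zero_of_nonpos (le_of_lt hy)
  rw [hev.deriv_eq, deriv_const]

lemma deriv2_rho_eq_zero_of_neg {s : ℝ} (hs : s < 0) :
    deriv (deriv Real.smoothTransition) s = 0 := by
  have hev : deriv Real.smoothTransition =ᶠ[𝓝 s] fun _ => 0 := by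
    filter_upwards [Iio_mem_nhds hs] with y hy using deriv_rho_eq_zero_of_neg hy
  rw [hev.deriv_eq, deriv_const]

lemma exists_bound_deriv_g : ∃ C : ℝ, 0 ≤ C ∧ ∀ s, |deriv g s| ≤ C := by
  have hsupp : HasCompactSupport g := by
    apply HasCompactSupport.intro (isCompact_Icc (a := (-1:ℝ)) (b := 1))
    intro x hx
    rcases le_or_gt 1 x with h | h
    · exact g_eq_zero_of_one_le h
    · have hx1 : x < -1 := by
        rcases lt_or_ge x (-1) with h' | h'
        · exact h'
        · exact absurd ⟨h', h.le⟩ hx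
      have : (1:ℝ) ≤ x + 1 → False := by intro hc; linarith
      simp [g, Real.smoothTransition.zero_of_nonpos (by linarith : x + 1 ≤ 0)]
  obtain ⟨C, hC⟩ := (hsupp.deriv).exists_bound_of_continuous
    ((contDiff_g (n := 1)).continuous_deriv le_rfl)
  exact ⟨max C 0, le_max_right _ _, fun s =>
    le_trans (by simpa [Real.norm_eq_abs] using hC s) (le_max_left _ _)⟩

lemma exists_bound_deriv_rho : ∃ C : ℝ, 0 ≤ C ∧ ∀ s, |deriv Real.smoothTransition s| ≤ C := by
  have hsupp : HasCompactSupport (deriv Real.smoothTransition) := by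
    apply HasCompactSupport.intro (isCompact_Icc (a := (0:ℝ)) (b := 1))
    intro x hx
    rcases lt_or_ge x 0 with h | h
    · exact deriv_rho_eq_zero_of_neg h
    · have hx1 : 1 < x := by
        rcases le_or_gt x 1 with h' | h'
        · exact absurd ⟨h, h'⟩ hx
        · exact h'
      have hev : Real.smoothTransition =ᶠ[𝓝 x] fun _ => 1 := by
        filter_upwards [Ioi_mem_nhds hx1] with y hy using
          Real.smoothTransition.one_of_one_le (le_of_lt hy)
      rw [hev.deriv_eq, deriv_const]
  obtain ⟨C, hC⟩ := hsupp.exists_bound_of_continuous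
    ((Real.smoothTransition.contDiff (n := 1)).continuous_deriv le_rfl)
  exact ⟨max C 0, le_max_right _ _, fun s =>
    le_trans (by simpa [Real.norm_eq_abs] using hC s) (le_max_left _ _)⟩

lemma exists_bound_deriv2_rho :
    ∃ C : ℝ, 0 ≤ C ∧ ∀ s, |deriv (deriv Real.smoothTransition) s| ≤ C := by
  have hsupp : HasCompactSupport (deriv Real.smoothTransition) := by
    apply HasCompactSupport.intro (isCompact_Icc (a := (0:ℝ)) (b := 1))
    intro x hx
    rcases lt_or_ge x 0 with h | h
    · exact deriv_rho_eq_zero_of_neg h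
    · have hx1 : 1 < x := by
        rcases le_or_gt x 1 with h' | h'
        · exact absurd ⟨h, h'⟩ hx
        · exact h'
      have hev : Real.smoothTransition =ᶠ[𝓝 x] fun _ => 1 := by
        filter_upwards [Ioi_mem_nhds hx1] with y hy using
          Real.smoothTransition.one_of_one_le (le_of_lt hy)
      rw [hev.deriv_eq, deriv_const]
  have hcd : ContDiff ℝ 1 (deriv Real.smoothTransition) := by
    have h21 : ((1:WithTop ℕ∞) + 1) = 2 := by norm_num
    have h2 : ContDiff ℝ 2 Real.smoothTransition := by
      exact_mod_cast Real.smoothTransition.contDiff (n := 2)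
    rw [← h21, contDiff_succ_iff_deriv] at h2
    exact h2.2.2
  obtain ⟨C, hC⟩ := (hsupp.deriv).exists_bound_of_continuous (hcd.continuous_deriv le_rfl)
  exact ⟨max C 0, le_max_right _ _, fun s =>
    le_trans (by simpa [Real.norm_eq_abs] using hC s) (le_max_left _ _)⟩

end DIAux

namespace DIAux

/-- Part A : Taylor-type bound for DI trajectories. -/
lemma taylor_bound {umax : ℝ} {x : ℝ → Plane} (hx : ContDiff ℝ 2 x)
    (hacc : ∀ t, ‖deriv (deriv x) t‖ ≤ umax) {T : ℝ} (hT : 0 ≤ T) :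
    ‖x T - x 0 - T • deriv x 0‖ ≤ umax * T ^ 2 / 2 := by
  have h21 : ((1:WithTop ℕ∞) + 1) = 2 := by norm_num
  have hx' : Differentiable ℝ x ∧ ContDiff ℝ 1 (deriv x) := by
    have h2 := hx; rw [← h21, contDiff_succ_iff_deriv] at h2
    exact ⟨h2.1, h2.2.2⟩
  have hdx : Differentiable ℝ (deriv x) := hx'.2.differentiable (by simp)
  -- step 1 : ‖deriv x s - deriv x 0‖ ≤ umax * s on [0, T]
  have step1 : ∀ s ∈ Set.Icc (0:ℝ) T, ‖deriv x s - deriv x 0‖ ≤ umax * (s - 0) := by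
    apply norm_image_sub_le_of_norm_deriv_right_le_segment
      (hdx.continuous.continuousOn)
      (fun s _ => ((hdx s).hasDerivAt).hasDerivWithinAt)
      (fun s _ => hacc s)
  -- step 2 : fencing with B s = umax * s^2 / 2
  have key : ∀ s ∈ Set.Icc (0:ℝ) T,
      ‖x s - x 0 - s • deriv x 0‖ ≤ umax * s ^ 2 / 2 := by
    intro s hs
    have hf' : ∀ y ∈ Set.Ico (0:ℝ) T,
        HasDerivWithinAt (fun z => x z - x 0 - z • deriv x 0)
          (deriv x y - deriv x 0) (Set.Ici y) y := by
      intro y _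
      have h1 : HasDerivAt x (deriv x y) y := (hx'.1 y).hasDerivAt
      have h2 : HasDerivAt (fun z : ℝ => z • deriv x 0) ((1:ℝ) • deriv x 0) y :=
        (hasDerivAt_id y).smul_const _
      exact ((h1.sub_const (x 0)).sub h2).hasDerivWithinAt.congr_deriv (by simp)
    have hB : ∀ y : ℝ, HasDerivAt (fun z => umax * z ^ 2 / 2) (umax * y) y := by
      intro y
      have : HasDerivAt (fun z : ℝ => z ^ 2) (2 * y) y := by
        simpa using hasDerivAt_pow 2 y
      exact ((this.const_mul umax).div_const 2).congr_deriv (by ring)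
    have := image_norm_le_of_norm_deriv_right_le_deriv_boundary
      (f := fun z => x z - x 0 - z • deriv x 0)
      (f' := fun y => deriv x y - deriv x 0)
      (a := 0) (b := T)
      (((hx'.1.continuous.continuousOn.sub continuousOn_const)).sub
        (continuousOn_id.smul continuousOn_const))
      hf' (by simp) hB
      (fun y hy => by simpa using step1 y ⟨hy.1, hy.2.le⟩)
    exact this hs
  exact key T ⟨hT, le_rfl⟩

end DIAux

namespace DIAux

lemma exists_traj (vmax umax : ℝ) (hv : 0 < vmax) (hu : 0 < umax)
    (p v : Plane) (hvle : ‖v‖ ≤ vmax) (q : Plane) :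
    ∃ T, 0 ≤ T ∧ ∃ x : ℝ → Plane, IsDITraj vmax umax x ∧
      x 0 = p ∧ deriv x 0 = v ∧ x T = q := by
  classical
  obtain ⟨Cg, hCg0, hCg⟩ := exists_bound_deriv_g
  obtain ⟨C1, hC10, hC1⟩ := exists_bound_deriv_rho
  obtain ⟨C2, hC20, hC2⟩ := exists_bound_deriv2_rho
  obtain ⟨T₁, hT₁def⟩ : ∃ T₁ : ℝ, T₁ = 1 + Cg * vmax / umax := ⟨_, rfl⟩
  have hT₁pos : 0 < T₁ := by
    have : 0 ≤ Cg * vmax / umax := by positivity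
    rw [hT₁def]; linarith
  obtain ⟨d, hddef⟩ : ∃ d : Plane, d = q - p - (T₁ * h 1) • v := ⟨_, rfl⟩
  obtain ⟨T₂, hT₂def⟩ : ∃ T₂ : ℝ, T₂ = 1 + C1 * ‖d‖ / vmax + C2 * ‖d‖ / umax := ⟨_, rfl⟩
  have hd1 : 0 ≤ C1 * ‖d‖ / vmax := by positivity
  have hd2 : 0 ≤ C2 * ‖d‖ / umax := by positivity
  have hT₂pos : 0 < T₂ := by rw [hT₂def]; linarith
  have hT₂1 : 1 ≤ T₂ := by rw [hT₂def]; linarith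
  obtain ⟨x, hxdef⟩ : ∃ x : ℝ → Plane,
      x = fun t => p + ((T₁ * h (t / T₁)) • v +
        Real.smoothTransition ((t - T₁) / T₂) • d) := ⟨_, rfl⟩
  obtain ⟨x', hx'def⟩ : ∃ x' : ℝ → Plane,
      x' = fun t => g (t / T₁) • v +
        (deriv Real.smoothTransition ((t - T₁) / T₂) * (1 / T₂)) • d := ⟨_, rfl⟩
  obtain ⟨x'', hx''def⟩ : ∃ x'' : ℝ → Plane,
      x'' = fun t => (deriv g (t / T₁) * (1 / T₁)) • v +
        (deriv (deriv Real.smoothTransition) ((t - T₁) / T₂) * (1 / T₂) * (1 / T₂)) • d :=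
    ⟨_, rfl⟩
  have h21 : ((1:WithTop ℕ∞) + 1) = 2 := by norm_num
  have hcd1 : ContDiff ℝ 1 (deriv Real.smoothTransition) := by
    have h2 : ContDiff ℝ 2 Real.smoothTransition := by
      exact_mod_cast Real.smoothTransition.contDiff (n := 2)
    rw [← h21, contDiff_succ_iff_deriv] at h2
    exact h2.2.2
  have hlinT₁ : ∀ t : ℝ, HasDerivAt (fun t : ℝ => t / T₁) (1 / T₁) t := fun t => by
    simpa using (hasDerivAt_id t).div_const T₁
  have hlinT₂ : ∀ t : ℝ, HasDerivAt (fun t : ℝ => (t - T₁) / T₂) (1 / T₂) t := fun t => by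
    simpa using ((hasDerivAt_id t).sub_const T₁).div_const T₂
  have hx' : ∀ t, HasDerivAt x (x' t) t := by
    intro t
    have ha : HasDerivAt (fun t : ℝ => T₁ * h (t / T₁)) (g (t / T₁)) t := by
      have := ((hasDerivAt_h (t / T₁)).comp t (hlinT₁ t)).const_mul T₁
      exact this.congr_deriv (by field_simp)
    have hb : HasDerivAt (fun t : ℝ => Real.smoothTransition ((t - T₁) / T₂))
        (deriv Real.smoothTransition ((t - T₁) / T₂) * (1 / T₂)) t :=
      (((Real.smoothTransition.contDiff (n := 1)).differentiable (by simp) _).hasDerivAt).comp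
        t (hlinT₂ t)
    rw [hxdef, hx'def]
    exact ((ha.smul_const v).add (hb.smul_const d)).const_add p
  have hderivx : deriv x = x' := funext fun t => (hx' t).deriv
  have hx'' : ∀ t, HasDerivAt x' (x'' t) t := by
    intro t
    have ha : HasDerivAt (fun t : ℝ => g (t / T₁)) (deriv g (t / T₁) * (1 / T₁)) t :=
      (((contDiff_g (n := 1)).differentiable (by simp) _).hasDerivAt).comp t (hlinT₁ t)
    have hb : HasDerivAt
        (fun t : ℝ => deriv Real.smoothTransition ((t - T₁) / T₂) * (1 / T₂))
        (deriv (deriv Real.smoothTransition) ((t - T₁) / T₂) * (1 / T₂) * (1 / T₂)) t := by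
      have := (((hcd1.differentiable (by simp) _).hasDerivAt).comp t (hlinT₂ t)).mul_const (1 / T₂)
      exact this
    rw [hx'def, hx''def]
    exact (ha.smul_const v).add (hb.smul_const d)
  have hderivx' : deriv x' = x'' := funext fun t => (hx'' t).deriv
  refine ⟨T₁ + T₂, by linarith, x, ⟨?_, ?_, ?_⟩, ?_, ?_, ?_⟩
  · -- ContDiff ℝ 2 x
    rw [← h21, contDiff_succ_iff_deriv]
    refine ⟨fun t => (hx' t).differentiableAt, by simp, ?_⟩
    rw [hderivx, hx'def]
    have hga : ContDiff ℝ 1 (fun t : ℝ => g (t / T₁)) :=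
      (contDiff_g (n := 1)).comp (contDiff_id.div_const T₁)
    have hgb : ContDiff ℝ 1
        (fun t : ℝ => deriv Real.smoothTransition ((t - T₁) / T₂) * (1 / T₂)) :=
      (hcd1.comp ((contDiff_id.sub contDiff_const).div_const T₂)).mul contDiff_const
    exact (hga.smul contDiff_const).add (hgb.smul contDiff_const)
  · -- speed bound
    intro t
    rw [hderivx, hx'def]
    rcases lt_or_ge t T₁ with hlt | hge
    · have hneg : (t - T₁) / T₂ < 0 := div_neg_of_neg_of_pos (by linarith) hT₂pos
      simp only [deriv_rho_eq_zero_of_neg hneg, zero_mul, zero_smul, add_zero]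
      rw [norm_smul, Real.norm_eq_abs, abs_of_nonneg (g_nonneg _)]
      calc g (t / T₁) * ‖v‖ ≤ 1 * vmax :=
            mul_le_mul (g_le_one _) hvle (norm_nonneg _) zero_le_one
        _ = vmax := one_mul _
    · have h1le : 1 ≤ t / T₁ := (one_le_div hT₁pos).mpr hge
      simp only [g_eq_zero_of_one_le h1le, zero_smul, zero_add]
      rw [norm_smul, Real.norm_eq_abs, abs_mul]
      have hb1 : |deriv Real.smoothTransition ((t - T₁) / T₂)| * |1 / T₂| * ‖d‖
          ≤ C1 * (1 / T₂) * ‖d‖ := by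
        apply mul_le_mul_of_nonneg_right _ (norm_nonneg d)
        rw [abs_of_pos (by positivity : (0:ℝ) < 1 / T₂)]
        exact mul_le_mul_of_nonneg_right (hC1 _) (by positivity)
      refine hb1.trans ?_
      rw [mul_one_div, div_mul_eq_mul_div, div_le_iff₀ hT₂pos]
      have h0 : C1 * ‖d‖ / vmax ≤ T₂ := by rw [hT₂def]; linarith
      rw [div_le_iff₀ hv] at h0
      linarith [h0]
  · -- acceleration bound
    intro t
    rw [hderivx, hderivx', hx''def]
    rcases lt_or_ge t T₁ with hlt | hge
    · have hneg : (t - T₁) / T₂ < 0 := div_neg_of_neg_of_pos (by linarith) hT₂pos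
      simp only [deriv2_rho_eq_zero_of_neg hneg, zero_mul, zero_smul, add_zero]
      rw [norm_smul, Real.norm_eq_abs, abs_mul]
      have hstep : |deriv g (t / T₁)| * |1 / T₁| * ‖v‖ ≤ Cg * (1 / T₁) * vmax := by
        apply mul_le_mul _ hvle (norm_nonneg _) (by positivity)
        rw [abs_of_pos (by positivity : (0:ℝ) < 1 / T₁)]
        exact mul_le_mul_of_nonneg_right (hCg _) (by positivity)
      refine hstep.trans ?_
      rw [mul_one_div, div_mul_eq_mul_div, div_le_iff₀ hT₁pos]
      have h0 : Cg * vmax / umax ≤ T₁ := by rw [hT₁def]; linarith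
      rw [div_le_iff₀ hu] at h0
      linarith [h0]
    · have h1le : 1 ≤ t / T₁ := (one_le_div hT₁pos).mpr hge
      simp only [deriv_g_eq_zero_of_one_le h1le, zero_mul, zero_smul, zero_add]
      rw [norm_smul, Real.norm_eq_abs, abs_mul, abs_mul]
      have habs : |1 / T₂| = 1 / T₂ := abs_of_pos (by positivity)
      have hstep : |deriv (deriv Real.smoothTransition) ((t - T₁) / T₂)| * |1 / T₂| * |1 / T₂|
          * ‖d‖ ≤ C2 * (1 / T₂) * (1 / T₂) * ‖d‖ := by
        rw [habs]
        apply mul_le_mul_of_nonneg_right _ (norm_nonneg d)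
        apply mul_le_mul_of_nonneg_right _ (by positivity : (0:ℝ) ≤ 1 / T₂)
        exact mul_le_mul_of_nonneg_right (hC2 _) (by positivity)
      refine hstep.trans ?_
      have h0 : C2 * ‖d‖ / umax ≤ T₂ := by rw [hT₂def]; linarith
      rw [div_le_iff₀ hu] at h0
      have key : C2 * ‖d‖ ≤ umax * (T₂ * T₂) := by
        calc C2 * ‖d‖ ≤ T₂ * umax := h0
          _ = umax * (T₂ * 1) := by ring
          _ ≤ umax * (T₂ * T₂) := by gcongr
      have heq : C2 * (1 / T₂) * (1 / T₂) * ‖d‖ = C2 * ‖d‖ / (T₂ * T₂) := by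
        field_simp
      rw [heq, div_le_iff₀ (by positivity)]
      linarith
  · -- x 0 = p
    have hneg : (0 - T₁) / T₂ < 0 := div_neg_of_neg_of_pos (by linarith) hT₂pos
    have hz : Real.smoothTransition ((0 - T₁) / T₂) = 0 :=
      Real.smoothTransition.zero_of_nonpos hneg.le
    have hh : h (0 / T₁) = 0 := by rw [zero_div, h_zero]
    rw [hxdef]
    simp only [hz, hh, mul_zero, zero_smul, add_zero]
  · -- deriv x 0 = v
    rw [hderivx, hx'def]
    have hneg : (0 - T₁) / T₂ < 0 := div_neg_of_neg_of_pos (by linarith) hT₂pos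
    have hz : deriv Real.smoothTransition ((0 - T₁) / T₂) = 0 :=
      deriv_rho_eq_zero_of_neg hneg
    have hg0 : g (0 / T₁) = 1 := by rw [zero_div]; exact g_zero
    simp only [hz, hg0, one_smul, zero_mul, zero_smul, add_zero]
  · -- x (T₁ + T₂) = q
    have h1 : (1:ℝ) ≤ (T₁ + T₂) / T₁ := by
      rw [le_div_iff₀ hT₁pos]; linarith
    have h2 : ((T₁ + T₂) - T₁) / T₂ = 1 := by field_simp; ring
    rw [hxdef]
    simp only [h_eq_of_one_le h1, h2, Real.smoothTransition.one_of_one_le (le_refl (1:ℝ)),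
      one_smul]
    rw [hddef]
    abel

end DIAux

open RealInnerProductSpace in
/-- upper bound on the area of the reachable set of a DI robot:
`Area(R_t(g)) ≤ 2 v₀ u_max t³ + u_max² t⁴` for every `t ≥ 0`. -/
theorem di_reachable_area_upper_bound
    (vmax umax v₀ : ℝ) (hvmax : 0 < vmax) (humax : 0 < umax)
    (p v : Plane) (hv₀ : ‖v‖ = v₀) (hle : v₀ ≤ vmax)
    (t : ℝ) (ht : 0 ≤ t) :
    volume (reachDI vmax umax p v t) ≤
      ENNReal.ofReal (2 * v₀ * umax * t ^ 3 + umax ^ 2 * t ^ 4) := by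
  classical
  have hv₀0 : 0 ≤ v₀ := hv₀ ▸ norm_nonneg v
  -- a unit vector in the direction of `v`
  obtain ⟨u, hu_norm, hvu⟩ : ∃ u : Plane, ‖u‖ = 1 ∧ v = v₀ • u := by
    by_cases hz : v = 0
    · refine ⟨EuclideanSpace.single 0 1, by simp, ?_⟩
      have : v₀ = 0 := by rw [← hv₀, hz, norm_zero]
      rw [hz, this, zero_smul]
    · refine ⟨‖v‖⁻¹ • v, ?_, ?_⟩
      · rw [norm_smul, norm_inv, norm_norm, inv_mul_cancel₀ (norm_ne_zero_iff.mpr hz)]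
      · rw [← hv₀, smul_smul, mul_inv_cancel₀ (norm_ne_zero_iff.mpr hz), one_smul]
  -- an orthonormal basis whose first vector is `u`
  obtain ⟨b, hb⟩ : ∃ b : OrthonormalBasis (Fin 2) ℝ Plane, b 0 = u := by
    have hcard : Module.finrank ℝ Plane = Fintype.card (Fin 2) := by
      simp [finrank_euclideanSpace_fin]
    have horth : Orthonormal ℝ (Set.restrict {0} (fun _ : Fin 2 => u)) := by
      constructor
      · intro i; exact hu_norm
      · intro i j hij
        exfalso
        apply hij
        have hi : (i : Fin 2) = 0 := i.2
        have hj : (j : Fin 2) = 0 := j.2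
        exact Subtype.ext (hi.trans hj.symm)
    obtain ⟨b, hb⟩ := horth.exists_orthonormalBasis_extension_of_card_eq hcard
    exact ⟨b, hb 0 rfl⟩
  have hb0norm : ‖b 0‖ = 1 := b.orthonormal.1 0
  have hb0v : ⟪b 0, v⟫ = v₀ := by
    have huu : ⟪u, u⟫ = (1:ℝ) := by
      rw [real_inner_self_eq_norm_mul_norm, hu_norm, one_mul]
    rw [hvu, real_inner_smul_right, hb, huu, mul_one]
  have hb1v : ⟪b 1, v⟫ = 0 := by
    rw [hvu, real_inner_smul_right, ← hb,
      b.orthonormal.2 (show (1 : Fin 2) ≠ 0 by decide), mul_zero]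
  -- approximate reachability facts
  have main : ∀ q ∈ reachDI vmax umax p v t, ∀ ε > 0, ∃ T, 0 ≤ T ∧ T ≤ t + ε ∧
      ‖q - p - T • v‖ ≤ umax * T ^ 2 / 2 := by
    intro q hq ε hε
    have hne : {T : ℝ | 0 ≤ T ∧ ∃ x : ℝ → Plane, IsDITraj vmax umax x ∧
        x 0 = p ∧ deriv x 0 = v ∧ x T = q}.Nonempty :=
      DIAux.exists_traj vmax umax hvmax humax p v (hv₀ ▸ hle) q
    have hq' : tauDI vmax umax p v q ≤ t := hq
    have hlt : sInf {T : ℝ | 0 ≤ T ∧ ∃ x : ℝ → Plane, IsDITraj vmax umax x ∧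
        x 0 = p ∧ deriv x 0 = v ∧ x T = q} < t + ε := by
      rw [tauDI] at hq'
      linarith
    obtain ⟨T, hT, hTlt⟩ := exists_lt_of_csInf_lt hne hlt
    obtain ⟨hT0, x, ⟨hxc, hxv, hxa⟩, hx0, hxd, hxT⟩ := hT
    refine ⟨T, hT0, hTlt.le, ?_⟩
    have := DIAux.taylor_bound hxc hxa hT0
    rwa [hx0, hxd, hxT] at this
  -- coordinate bounds
  have coord : ∀ q ∈ reachDI vmax umax p v t,
      (-(umax * t ^ 2 / 2) ≤ ⟪b 0, q - p⟫ ∧ ⟪b 0, q - p⟫ ≤ v₀ * t + umax * t ^ 2 / 2) ∧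
      (-(umax * t ^ 2 / 2) ≤ ⟪b 1, q - p⟫ ∧ ⟪b 1, q - p⟫ ≤ umax * t ^ 2 / 2) := by
    intro q hq
    have step : ∀ ε > 0, ∃ T, 0 ≤ T ∧ T ≤ t + ε ∧
        |⟪b 0, q - p⟫ - T * v₀| ≤ umax * (t + ε) ^ 2 / 2 ∧
        |⟪b 1, q - p⟫| ≤ umax * (t + ε) ^ 2 / 2 := by
      intro ε hε
      obtain ⟨T, hT0, hTle, hTb⟩ := main q hq ε hε
      have hsq : umax * T ^ 2 / 2 ≤ umax * (t + ε) ^ 2 / 2 := by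
        have : T ^ 2 ≤ (t + ε) ^ 2 := pow_le_pow_left₀ hT0 hTle 2
        nlinarith
      have hsplit : ∀ i : Fin 2, ⟪b i, q - p - T • v⟫ = ⟪b i, q - p⟫ - T * ⟪b i, v⟫ := by
        intro i
        rw [inner_sub_right, real_inner_smul_right]
      refine ⟨T, hT0, hTle, ?_, ?_⟩
      · have h0 : |⟪b 0, q - p - T • v⟫| ≤ ‖q - p - T • v‖ := by
          calc |⟪b 0, q - p - T • v⟫| ≤ ‖b 0‖ * ‖q - p - T • v‖ := abs_real_inner_le_norm _ _
            _ = ‖q - p - T • v‖ := by rw [hb0norm, one_mul]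
        rw [hsplit 0, hb0v] at h0
        exact (h0.trans hTb).trans hsq
      · have h1 : |⟪b 1, q - p - T • v⟫| ≤ ‖q - p - T • v‖ := by
          calc |⟪b 1, q - p - T • v⟫| ≤ ‖b 1‖ * ‖q - p - T • v‖ := abs_real_inner_le_norm _ _
            _ = ‖q - p - T • v‖ := by rw [b.orthonormal.1 1, one_mul]
        rw [hsplit 1, hb1v, mul_zero, sub_zero] at h1
        exact (h1.trans hTb).trans hsq
    -- pass to the limit ε → 0⁺
    have hlim : ∀ c : ℝ, (∀ ε > (0:ℝ), c ≤ umax * (t + ε) ^ 2 / 2) →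
        c ≤ umax * t ^ 2 / 2 := by
      intro c hc
      have htend : Filter.Tendsto (fun ε : ℝ => umax * (t + ε) ^ 2 / 2) (𝓝[>] 0)
          (𝓝 (umax * t ^ 2 / 2)) := by
        have hcont : Continuous (fun ε : ℝ => umax * (t + ε) ^ 2 / 2) := by fun_prop
        have := (hcont.tendsto 0).mono_left (nhdsWithin_le_nhds (s := Set.Ioi (0:ℝ)))
        simpa using this
      refine ge_of_tendsto htend ?_
      filter_upwards [self_mem_nhdsWithin] with ε hε using hc ε hε
    have hlim2 : ∀ c : ℝ, (∀ ε > (0:ℝ), c ≤ v₀ * (t + ε) + umax * (t + ε) ^ 2 / 2) →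
        c ≤ v₀ * t + umax * t ^ 2 / 2 := by
      intro c hc
      have htend : Filter.Tendsto (fun ε : ℝ => v₀ * (t + ε) + umax * (t + ε) ^ 2 / 2)
          (𝓝[>] 0) (𝓝 (v₀ * t + umax * t ^ 2 / 2)) := by
        have hcont : Continuous (fun ε : ℝ => v₀ * (t + ε) + umax * (t + ε) ^ 2 / 2) := by
          fun_prop
        have := (hcont.tendsto 0).mono_left (nhdsWithin_le_nhds (s := Set.Ioi (0:ℝ)))
        simpa using this
      refine ge_of_tendsto htend ?_
      filter_upwards [self_mem_nhdsWithin] with ε hε using hc ε hε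
    refine ⟨⟨?_, ?_⟩, ?_, ?_⟩
    · rw [neg_le]
      apply hlim
      intro ε hε
      obtain ⟨T, hT0, hTle, h0, _⟩ := step ε hε
      have := abs_le.mp h0
      nlinarith [mul_nonneg hT0 hv₀0]
    · apply hlim2
      intro ε hε
      obtain ⟨T, hT0, hTle, h0, _⟩ := step ε hε
      have := abs_le.mp h0
      have hTv : T * v₀ ≤ (t + ε) * v₀ := mul_le_mul_of_nonneg_right hTle hv₀0
      nlinarith
    · rw [neg_le]
      apply hlim
      intro ε hε
      obtain ⟨T, hT0, hTle, _, h1⟩ := step ε hε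
      have := abs_le.mp h1
      linarith [this.1]
    · apply hlim
      intro ε hε
      obtain ⟨T, hT0, hTle, _, h1⟩ := step ε hε
      exact (abs_le.mp h1).2
  -- the bounding box
  obtain ⟨lo, hlodef⟩ : ∃ lo : Fin 2 → ℝ,
      lo = ![⟪b 0, p⟫ - umax * t ^ 2 / 2, ⟪b 1, p⟫ - umax * t ^ 2 / 2] := ⟨_, rfl⟩
  obtain ⟨hi, hhidef⟩ : ∃ hi : Fin 2 → ℝ,
      hi = ![⟪b 0, p⟫ + (v₀ * t + umax * t ^ 2 / 2), ⟪b 1, p⟫ + umax * t ^ 2 / 2] := ⟨_, rfl⟩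
  have hbox_meas : MeasurableSet (Set.pi Set.univ fun i => Set.Icc (lo i) (hi i)) :=
    MeasurableSet.univ_pi fun i => measurableSet_Icc
  have hsub : reachDI vmax umax p v t ⊆
      b.repr ⁻¹' ((MeasurableEquiv.toLp 2 (Fin 2 → ℝ)).symm ⁻¹'
        (Set.pi Set.univ fun i => Set.Icc (lo i) (hi i))) := by
    intro q hq
    obtain ⟨⟨h00, h01⟩, h10, h11⟩ := coord q hq
    have hmem : ∀ i : Fin 2, b.repr q i ∈ Set.Icc (lo i) (hi i) := by
      have hrepr : ∀ i : Fin 2, b.repr q i = ⟪b i, q⟫ := fun i => b.repr_apply_apply q i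
      have hq0 : ⟪b 0, q⟫ = ⟪b 0, p⟫ + ⟪b 0, q - p⟫ := by
        rw [inner_sub_right]; ring
      have hq1 : ⟪b 1, q⟫ = ⟪b 1, p⟫ + ⟪b 1, q - p⟫ := by
        rw [inner_sub_right]; ring
      rw [Fin.forall_fin_two]
      constructor
      · rw [hrepr 0, hq0, hlodef, hhidef]
        simp only [Matrix.cons_val_zero]
        constructor <;> linarith
      · rw [hrepr 1, hq1, hlodef, hhidef]
        simp only [Matrix.cons_val_one, Matrix.head_cons, Matrix.cons_val_zero]
        constructor <;> linarith
    intro i _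
    exact hmem i
  calc volume (reachDI vmax umax p v t)
      ≤ volume (b.repr ⁻¹' ((MeasurableEquiv.toLp 2 (Fin 2 → ℝ)).symm ⁻¹'
        (Set.pi Set.univ fun i => Set.Icc (lo i) (hi i)))) := measure_mono hsub
    _ = volume ((MeasurableEquiv.toLp 2 (Fin 2 → ℝ)).symm ⁻¹'
        (Set.pi Set.univ fun i => Set.Icc (lo i) (hi i))) :=
        b.measurePreserving_repr.measure_preimage
          (((MeasurableEquiv.toLp 2 (Fin 2 → ℝ)).symm.measurable hbox_meas).nullMeasurableSet)
    _ = volume (Set.pi Set.univ fun i => Set.Icc (lo i) (hi i)) :=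
        (EuclideanSpace.volume_preserving_symm_measurableEquiv_toLp (Fin 2)).measure_preimage
          hbox_meas.nullMeasurableSet
    _ = ∏ i, volume (Set.Icc (lo i) (hi i)) := volume_pi_pi _
    _ = ENNReal.ofReal (hi 0 - lo 0) * ENNReal.ofReal (hi 1 - lo 1) := by
        rw [Fin.prod_univ_two, Real.volume_Icc, Real.volume_Icc]
    _ = ENNReal.ofReal ((v₀ * t + umax * t ^ 2) * (umax * t ^ 2)) := by
        rw [hlodef, hhidef]
        simp only [Matrix.cons_val_zero, Matrix.cons_val_one, Matrix.head_cons]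
        rw [← ENNReal.ofReal_mul (by nlinarith)]
        congr 1
        ring
    _ ≤ ENNReal.ofReal (2 * v₀ * umax * t ^ 3 + umax ^ 2 * t ^ 4) := by
        apply ENNReal.ofReal_le_ofReal
        nlinarith [mul_nonneg (mul_nonneg hv₀0 humax.le) (pow_nonneg ht 3)]
end
end

section
/- Let Q ⊂ ℝ² be a square of area A > 0 and fix v_max > 0, u_max > 0. Let p* = (p*₁, …, p*_m) ∈ Q^m be any minimizer of H_m(·, Q) (an m-median configuration), so H_m(p*, Q) = H*_m(Q). Then the coverage cost of the Median Stationing algorithm for DI robots, T_MS^DI = (1/A) ∫_Q min_{1≤i≤m} τ_DI((p*_i, 0), q) dq, satisfies H*_m(Q)/v_max ≤ T_MS^DI ≤ H*_m(Q)/v_max + v_max/(2 u_max) + √(2 √(2A) / u_max). -/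
open MeasureTheory Filter Topology Real

noncomputable section

namespace DIAux


lemma hasDerivAt_hinge (t : ℝ) :
    HasDerivAt (fun s : ℝ => (max s 0) ^ 3) (3 * (max t 0) ^ 2) t := by
  rcases lt_trichotomy t 0 with h | h | h
  · have hev : (fun s : ℝ => (max s 0) ^ 3) =ᶠ[𝓝 t] fun _ => (0 : ℝ) := by
      filter_upwards [Iio_mem_nhds h] with s hs
      have : s < 0 := hs
      simp [max_eq_right this.le]
    have h' : HasDerivAt (fun _ : ℝ => (0 : ℝ)) (3 * (max t 0) ^ 2) t := by
      simpa [max_eq_right h.le] using (hasDerivAt_const t (0 : ℝ))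
    exact h'.congr_of_eventuallyEq hev
  · subst h
    rw [hasDerivAt_iff_isLittleO_nhds_zero]
    rw [Asymptotics.isLittleO_iff]
    intro c hc
    have h2 : Tendsto (fun h : ℝ => h ^ 2) (𝓝 0) (𝓝 0) := by
      simpa using ((continuous_pow 2).tendsto (0 : ℝ))
    filter_upwards [h2.eventually_lt_const hc] with h hh
    have h1 : max h 0 ^ 3 ≤ |h| * h ^ 2 := by
      rcases le_or_gt h 0 with h0 | h0
      · simp only [max_eq_right h0]
        norm_num
        positivity
      · rw [max_eq_left h0.le, abs_of_pos h0]
        ring_nf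
        exact le_rfl
    have h0 : (0:ℝ) ≤ max h 0 ^ 3 := by positivity
    have heq : ‖((0 + h) ⊔ 0) ^ 3 - (0 ⊔ (0:ℝ)) ^ 3 - h • (3 * ((0:ℝ) ⊔ 0) ^ 2)‖
        = max h 0 ^ 3 := by
      rw [Real.norm_eq_abs]
      norm_num

    rw [heq, Real.norm_eq_abs]
    calc max h 0 ^ 3 ≤ |h| * h ^ 2 := h1
      _ ≤ c * |h| := by nlinarith [abs_nonneg h]
  · have hev : (fun s : ℝ => (max s 0) ^ 3) =ᶠ[𝓝 t] fun s => s ^ 3 := by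
      filter_upwards [Ioi_mem_nhds h] with s hs
      have : (0:ℝ) < s := hs
      simp [max_eq_left this.le]
    have h' : HasDerivAt (fun s : ℝ => s ^ 3) (3 * (max t 0) ^ 2) t := by
      have := hasDerivAt_pow 3 t
      refine this.congr_deriv ?_
      simp [max_eq_left h.le]
    exact h'.congr_of_eventuallyEq hev

lemma hasDerivAt_hinge2 (t : ℝ) :
    HasDerivAt (fun s : ℝ => 3 * (max s 0) ^ 2) (6 * max t 0) t := by
  rcases lt_trichotomy t 0 with h | h | h
  · have hev : (fun s : ℝ => 3 * (max s 0) ^ 2) =ᶠ[𝓝 t] fun _ => (0 : ℝ) := by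
      filter_upwards [Iio_mem_nhds h] with s hs
      have : s < 0 := hs
      simp [max_eq_right this.le]
    have h' : HasDerivAt (fun _ : ℝ => (0 : ℝ)) (6 * max t 0) t := by
      simpa [max_eq_right h.le] using (hasDerivAt_const t (0 : ℝ))
    exact h'.congr_of_eventuallyEq hev
  · subst h
    rw [hasDerivAt_iff_isLittleO_nhds_zero]
    rw [Asymptotics.isLittleO_iff]
    intro c hc
    have h2 : Tendsto (fun h : ℝ => 3 * |h|) (𝓝 0) (𝓝 0) := by
      have := ((by exact continuous_const.mul continuous_abs : Continuous fun h:ℝ => 3*|h|)).tendsto (0 : ℝ)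
      simpa using this
    filter_upwards [h2.eventually_le_const hc] with h hh
    have h1 : 3 * max h 0 ^ 2 ≤ (3 * |h|) * |h| := by
      rcases le_or_gt h 0 with h0 | h0
      · simp only [max_eq_right h0]
        norm_num
        positivity
      · rw [max_eq_left h0.le, abs_of_pos h0]; ring_nf; exact le_rfl
    have h0 : (0:ℝ) ≤ 3 * max h 0 ^ 2 := by positivity
    have heq : ‖3 * ((0 + h) ⊔ 0) ^ 2 - 3 * ((0:ℝ) ⊔ 0) ^ 2 - h • (6 * ((0:ℝ) ⊔ 0))‖
        = 3 * max h 0 ^ 2 := by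
      rw [Real.norm_eq_abs]
      norm_num

    rw [heq, Real.norm_eq_abs]
    calc 3 * max h 0 ^ 2 ≤ (3 * |h|) * |h| := h1
      _ ≤ c * |h| := by nlinarith [abs_nonneg h]
  · have hev : (fun s : ℝ => 3 * (max s 0) ^ 2) =ᶠ[𝓝 t] fun s => 3 * s ^ 2 := by
      filter_upwards [Ioi_mem_nhds h] with s hs
      have : (0:ℝ) < s := hs
      simp [max_eq_left this.le]
    have h' : HasDerivAt (fun s : ℝ => 3 * s ^ 2) (6 * max t 0) t := by
      have := (hasDerivAt_pow 2 t).const_mul (3:ℝ)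
      refine this.congr_deriv ?_
      simp [max_eq_left h.le]
      ring
    exact h'.congr_of_eventuallyEq hev



def sfun (u T₁ t : ℝ) : ℝ :=
  (u / (3 * T₁ ^ 2)) * ((max t 0) ^ 3 * (2 * T₁ - t) + (max (t - T₁) 0) ^ 3 * (t + T₁))

def dsfun (u T₁ t : ℝ) : ℝ :=
  (u / (3 * T₁ ^ 2)) * (3 * (max t 0) ^ 2 * (2 * T₁ - t) - (max t 0) ^ 3
    + 3 * (max (t - T₁) 0) ^ 2 * (t + T₁) + (max (t - T₁) 0) ^ 3)

def ddsfun (u T₁ t : ℝ) : ℝ :=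
  (u / (3 * T₁ ^ 2)) * (6 * (max t 0) * (2 * T₁ - t) - 6 * (max t 0) ^ 2
    + 6 * (max (t - T₁) 0) * (t + T₁) + 6 * (max (t - T₁) 0) ^ 2)

lemma hasDerivAt_hinge_shift (T₁ t : ℝ) :
    HasDerivAt (fun s : ℝ => (max (s - T₁) 0) ^ 3) (3 * (max (t - T₁) 0) ^ 2) t := by
  have := (hasDerivAt_hinge (t - T₁)).comp t ((hasDerivAt_id t).sub_const T₁)
  exact this.congr_deriv (mul_one _)

lemma hasDerivAt_hinge2_shift (T₁ t : ℝ) :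
    HasDerivAt (fun s : ℝ => 3 * (max (s - T₁) 0) ^ 2) (6 * max (t - T₁) 0) t := by
  have := (hasDerivAt_hinge2 (t - T₁)).comp t ((hasDerivAt_id t).sub_const T₁)
  exact this.congr_deriv (mul_one _)

lemma hasDerivAt_sfun (u T₁ t : ℝ) : HasDerivAt (sfun u T₁) (dsfun u T₁ t) t := by
  have h3 : HasDerivAt (fun s : ℝ => (max s 0) ^ 3 * (2 * T₁ - s))
      (3 * (max t 0) ^ 2 * (2 * T₁ - t) + (max t 0) ^ 3 * (-1)) t :=
    (hasDerivAt_hinge t).mul ((hasDerivAt_id t).const_sub (2 * T₁))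
  have h4 : HasDerivAt (fun s : ℝ => (max (s - T₁) 0) ^ 3 * (s + T₁))
      (3 * (max (t - T₁) 0) ^ 2 * (t + T₁) + (max (t - T₁) 0) ^ 3 * 1) t :=
    (hasDerivAt_hinge_shift T₁ t).mul ((hasDerivAt_id t).add_const T₁)
  have := (h3.add h4).const_mul (u / (3 * T₁ ^ 2))
  refine this.congr_deriv ?_
  unfold dsfun
  ring

lemma hasDerivAt_dsfun (u T₁ t : ℝ) : HasDerivAt (dsfun u T₁) (ddsfun u T₁ t) t := by
  have h1 : HasDerivAt (fun s : ℝ => 3 * (max s 0) ^ 2 * (2 * T₁ - s))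
      (6 * (max t 0) * (2 * T₁ - t) + 3 * (max t 0) ^ 2 * (-1)) t :=
    (hasDerivAt_hinge2 t).mul ((hasDerivAt_id t).const_sub (2 * T₁))
  have h2 : HasDerivAt (fun s : ℝ => 3 * (max (s - T₁) 0) ^ 2 * (s + T₁))
      (6 * (max (t - T₁) 0) * (t + T₁) + 3 * (max (t - T₁) 0) ^ 2 * 1) t :=
    (hasDerivAt_hinge2_shift T₁ t).mul ((hasDerivAt_id t).add_const T₁)
  have := (((h1.sub (hasDerivAt_hinge t)).add h2).add (hasDerivAt_hinge_shift T₁ t)).const_mul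
    (u / (3 * T₁ ^ 2))
  refine this.congr_deriv ?_
  unfold ddsfun
  ring

lemma deriv_sfun (u T₁ : ℝ) : deriv (sfun u T₁) = dsfun u T₁ :=
  funext fun t => (hasDerivAt_sfun u T₁ t).deriv

lemma deriv_dsfun (u T₁ : ℝ) : deriv (dsfun u T₁) = ddsfun u T₁ :=
  funext fun t => (hasDerivAt_dsfun u T₁ t).deriv

lemma continuous_ddsfun (u T₁ : ℝ) : Continuous (ddsfun u T₁) := by
  unfold ddsfun
  have hmax : Continuous fun t : ℝ => max t 0 := continuous_id.max continuous_const
  have hmax2 : Continuous fun t : ℝ => max (t - T₁) 0 :=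
    (continuous_id.sub continuous_const).max continuous_const
  fun_prop

lemma contDiff_sfun (u T₁ : ℝ) : ContDiff ℝ 2 (sfun u T₁) := by
  have h2 : (2 : WithTop ℕ∞) = 1 + 1 := by norm_num
  rw [h2, contDiff_succ_iff_deriv]
  refine ⟨fun t => (hasDerivAt_sfun u T₁ t).differentiableAt, by simp, ?_⟩
  rw [deriv_sfun]
  have h1 : (1 : WithTop ℕ∞) = 0 + 1 := by norm_num
  rw [h1, contDiff_succ_iff_deriv]
  refine ⟨fun t => (hasDerivAt_dsfun u T₁ t).differentiableAt, by simp, ?_⟩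
  rw [deriv_dsfun, contDiff_zero]
  exact continuous_ddsfun u T₁

lemma sfun_zero (u T₁ : ℝ) (hT : 0 < T₁) : sfun u T₁ 0 = 0 := by
  unfold sfun
  rw [max_self, max_eq_right (by linarith : (0:ℝ) - T₁ ≤ 0)]
  ring

lemma dsfun_zero (u T₁ : ℝ) (hT : 0 < T₁) : dsfun u T₁ 0 = 0 := by
  unfold dsfun
  rw [max_self, max_eq_right (by linarith : (0:ℝ) - T₁ ≤ 0)]
  ring

lemma dsfun_bounds (u T₁ : ℝ) (hu : 0 < u) (hT : 0 < T₁) (t : ℝ) :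
    0 ≤ dsfun u T₁ t ∧ dsfun u T₁ t ≤ 2 * u * T₁ / 3 := by
  have hc : 0 < u / (3 * T₁ ^ 2) := by positivity
  rcases le_or_gt t 0 with h0 | h0
  · rw [show dsfun u T₁ t = 0 by
      unfold dsfun
      rw [max_eq_right h0, max_eq_right (by linarith : t - T₁ ≤ 0)]
      ring]
    exact ⟨le_rfl, by positivity⟩
  rcases le_or_gt t T₁ with h1 | h1
  · have he : dsfun u T₁ t = (u / (3 * T₁ ^ 2)) * (6 * T₁ * t ^ 2 - 4 * t ^ 3) := by
      unfold dsfun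
      rw [max_eq_left h0.le, max_eq_right (by linarith : t - T₁ ≤ 0)]
      ring
    rw [he]
    constructor
    · have : 0 ≤ 6 * T₁ * t ^ 2 - 4 * t ^ 3 := by
        nlinarith [mul_le_mul_of_nonneg_left h1 (sq_nonneg t)]
      positivity
    · have hX : 6 * T₁ * t ^ 2 - 4 * t ^ 3 ≤ 2 * T₁ ^ 3 := by
        nlinarith [mul_nonneg (sq_nonneg (T₁ - t)) (by linarith : (0:ℝ) ≤ T₁ + 2 * t)]
      calc (u / (3 * T₁ ^ 2)) * (6 * T₁ * t ^ 2 - 4 * t ^ 3)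
          ≤ (u / (3 * T₁ ^ 2)) * (2 * T₁ ^ 3) := mul_le_mul_of_nonneg_left hX hc.le
        _ = 2 * u * T₁ / 3 := by field_simp
  · have he : dsfun u T₁ t = (u / (3 * T₁ ^ 2)) * (2 * T₁ ^ 3) := by
      unfold dsfun
      rw [max_eq_left (by linarith : (0:ℝ) ≤ t), max_eq_left (by linarith : (0:ℝ) ≤ t - T₁)]
      ring
    rw [he, show (u / (3 * T₁ ^ 2)) * (2 * T₁ ^ 3) = 2 * u * T₁ / 3 by field_simp]
    exact ⟨by positivity, le_rfl⟩

lemma ddsfun_bound (u T₁ : ℝ) (hu : 0 < u) (hT : 0 < T₁) (t : ℝ) :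
    ‖ddsfun u T₁ t‖ ≤ u := by
  have hc : 0 < u / (3 * T₁ ^ 2) := by positivity
  rw [Real.norm_eq_abs, abs_le]
  rcases le_or_gt t 0 with h0 | h0
  · rw [show ddsfun u T₁ t = 0 by
      unfold ddsfun
      rw [max_eq_right h0, max_eq_right (by linarith : t - T₁ ≤ 0)]
      ring]
    constructor <;> linarith
  rcases le_or_gt t T₁ with h1 | h1
  · have he : ddsfun u T₁ t = (u / (3 * T₁ ^ 2)) * (12 * T₁ * t - 12 * t ^ 2) := by
      unfold ddsfun
      rw [max_eq_left h0.le, max_eq_right (by linarith : t - T₁ ≤ 0)]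
      ring
    rw [he]
    have hY0 : (0:ℝ) ≤ 12 * T₁ * t - 12 * t ^ 2 := by nlinarith
    have hYu : 12 * T₁ * t - 12 * t ^ 2 ≤ 3 * T₁ ^ 2 := by nlinarith [sq_nonneg (T₁ - 2 * t)]
    constructor
    · have : 0 ≤ (u / (3 * T₁ ^ 2)) * (12 * T₁ * t - 12 * t ^ 2) := by positivity
      linarith
    · calc (u / (3 * T₁ ^ 2)) * (12 * T₁ * t - 12 * t ^ 2)
          ≤ (u / (3 * T₁ ^ 2)) * (3 * T₁ ^ 2) := mul_le_mul_of_nonneg_left hYu hc.le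
        _ = u := by field_simp
  · rw [show ddsfun u T₁ t = 0 by
      unfold ddsfun
      rw [max_eq_left (by linarith : (0:ℝ) ≤ t), max_eq_left (by linarith : (0:ℝ) ≤ t - T₁)]
      ring]
    constructor <;> linarith

lemma sfun_tail (u T₁ : ℝ) (hu : 0 < u) (hT : 0 < T₁) (t : ℝ) (ht : T₁ ≤ t) :
    sfun u T₁ t = u * T₁ ^ 2 / 3 + (2 * u * T₁ / 3) * (t - T₁) := by
  unfold sfun
  rw [max_eq_left (by linarith : (0:ℝ) ≤ t), max_eq_left (by linarith : (0:ℝ) ≤ t - T₁)]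
  field_simp
  ring



def Sset (v u : ℝ) (p q : Plane) : Set ℝ :=
  {T : ℝ | 0 ≤ T ∧ ∃ x : ℝ → Plane, IsDITraj v u x ∧ x 0 = p ∧ deriv x 0 = 0 ∧ x T = q}

lemma tauDI_eq_sInf (v u : ℝ) (p q : Plane) : tauDI v u p 0 q = sInf (Sset v u p q) := rfl

lemma mem_Sset_of (v u T₁ : ℝ) (hv : 0 < v) (hu : 0 < u) (hT₁ : 0 < T₁) (p q : Plane)
    (h0 : 0 < ‖q - p‖) (hVle : 2 * u * T₁ / 3 ≤ v)
    (hd₁ : u * T₁ ^ 2 / 3 ≤ ‖q - p‖) :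
    T₁ + (‖q - p‖ - u * T₁ ^ 2 / 3) / (2 * u * T₁ / 3) ∈ Sset v u p q := by
  set d : ℝ := ‖q - p‖ with hd
  have hTT₁ : T₁ ≤ T₁ + (d - u * T₁ ^ 2 / 3) / (2 * u * T₁ / 3) :=
    le_add_of_nonneg_right (div_nonneg (by linarith) (by positivity))
  have hT0 : 0 ≤ T₁ + (d - u * T₁ ^ 2 / 3) / (2 * u * T₁ / 3) := le_trans hT₁.le hTT₁
  set e : Plane := ‖q - p‖⁻¹ • (q - p) with hedef
  have he : ‖e‖ = 1 := by
    rw [hedef, norm_smul, norm_inv, norm_norm, ← hd]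
    field_simp
  set x : ℝ → Plane := fun t => p + sfun u T₁ t • e with hxdef
  have hx' : ∀ t, HasDerivAt x (dsfun u T₁ t • e) t := fun t =>
    ((hasDerivAt_sfun u T₁ t).smul_const e).const_add p
  have hderiv : deriv x = fun t => dsfun u T₁ t • e := funext fun t => (hx' t).deriv
  have hderiv2 : deriv (deriv x) = fun t => ddsfun u T₁ t • e := by
    rw [hderiv]
    exact funext fun t => ((hasDerivAt_dsfun u T₁ t).smul_const e).deriv
  refine ⟨hT0, x, ⟨?_, ?_, ?_⟩, ?_, ?_, ?_⟩
  · exact contDiff_const.add ((contDiff_sfun u T₁).smul contDiff_const)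
  · intro t
    rw [hderiv]
    simp only [norm_smul, he, mul_one, Real.norm_eq_abs,
      abs_of_nonneg (dsfun_bounds u T₁ hu hT₁ t).1]
    exact le_trans (dsfun_bounds u T₁ hu hT₁ t).2 hVle
  · intro t
    rw [hderiv2]
    simp only [norm_smul, he, mul_one]
    exact ddsfun_bound u T₁ hu hT₁ t
  · rw [hxdef]
    simp [sfun_zero u T₁ hT₁]
  · rw [hderiv]
    simp [dsfun_zero u T₁ hT₁]
  · rw [hxdef]
    simp only
    have hsT : sfun u T₁ (T₁ + (d - u * T₁ ^ 2 / 3) / (2 * u * T₁ / 3)) = d := by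
      rw [sfun_tail u T₁ hu hT₁ _ hTT₁]
      have ht1 : T₁ + (d - u * T₁ ^ 2 / 3) / (2 * u * T₁ / 3) - T₁
          = (d - u * T₁ ^ 2 / 3) / (2 * u * T₁ / 3) := by ring
      have h2 : (2 * u * T₁ / 3) * ((d - u * T₁ ^ 2 / 3) / (2 * u * T₁ / 3))
          = d - u * T₁ ^ 2 / 3 := by
        field_simp
      rw [ht1, h2]
      ring
    rw [hsT, hedef, ← hd, smul_smul, mul_inv_cancel₀ (ne_of_gt h0), one_smul]
    abel

lemma exists_good_T (v u : ℝ) (hv : 0 < v) (hu : 0 < u) (p q : Plane) (DD : ℝ)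
    (hDD : ‖p - q‖ ≤ DD) :
    ∃ T ∈ Sset v u p q, T ≤ ‖p - q‖ / v + v / (2 * u) + Real.sqrt (2 * DD / u) := by
  have hdpq : ‖p - q‖ = ‖q - p‖ := norm_sub_rev p q
  rcases eq_or_lt_of_le (norm_nonneg (q - p)) with h0 | h0
  · -- q = p
    have hq : q = p := by
      have h1 : q - p = 0 := by rw [← norm_eq_zero]; exact h0.symm
      exact sub_eq_zero.mp h1
    refine ⟨0, ⟨le_rfl, fun _ => p, ?_, rfl, ?_, by rw [hq]⟩, ?_⟩
    · refine ⟨contDiff_const, ?_, ?_⟩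
      · intro t; rw [deriv_const']; simpa using hv.le
      · intro t; rw [deriv_const']; simp only [deriv_const']; simpa using hu.le
    · rw [deriv_const']
    · have h1 : 0 ≤ ‖p - q‖ / v := by positivity
      have h2 : 0 ≤ v / (2 * u) := by positivity
      have h3 : 0 ≤ Real.sqrt (2 * DD / u) := Real.sqrt_nonneg _
      linarith
  · have hDDd : ‖q - p‖ ≤ DD := by rw [← hdpq]; exact hDD
    rcases le_total (Real.sqrt (3 * ‖q - p‖ / u)) (3 * v / (2 * u)) with hmin | hmin
    · -- short case : T₁ = sqrt(3d/u)
      have hT₁ : 0 < Real.sqrt (3 * ‖q - p‖ / u) := Real.sqrt_pos.mpr (by positivity)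
      have hsq : Real.sqrt (3 * ‖q - p‖ / u) ^ 2 = 3 * ‖q - p‖ / u :=
        Real.sq_sqrt (by positivity)
      have hVle : 2 * u * Real.sqrt (3 * ‖q - p‖ / u) / 3 ≤ v := by
        rw [le_div_iff₀ (by positivity : (0:ℝ) < 2 * u)] at hmin
        linarith
      have hd₁ : u * Real.sqrt (3 * ‖q - p‖ / u) ^ 2 / 3 ≤ ‖q - p‖ := by
        rw [hsq]
        have : u * (3 * ‖q - p‖ / u) / 3 = ‖q - p‖ := by field_simp
        linarith [this.le]
      refine ⟨_, mem_Sset_of v u _ hv hu hT₁ p q h0 hVle hd₁, ?_⟩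
      have hz : ‖q - p‖ - u * Real.sqrt (3 * ‖q - p‖ / u) ^ 2 / 3 = 0 := by
        rw [hsq]; field_simp; ring
      rw [hz, zero_div, add_zero]
      have h1 : Real.sqrt (2 * ‖q - p‖ / u) ≤ ‖q - p‖ / v + v / (2 * u) := by
        have hR : (0:ℝ) ≤ ‖q - p‖ / v + v / (2 * u) := by positivity
        have h4 : (‖q - p‖ / v) * (v / (2 * u)) = ‖q - p‖ / (2 * u) := by field_simp
        have h5 : 2 * ‖q - p‖ / u = 4 * (‖q - p‖ / (2 * u)) := by
          field_simp
          ring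
        have hq2 : 2 * ‖q - p‖ / u ≤ (‖q - p‖ / v + v / (2 * u)) ^ 2 := by
          nlinarith [sq_nonneg (‖q - p‖ / v - v / (2 * u)), h4, h5]
        calc Real.sqrt (2 * ‖q - p‖ / u) ≤ Real.sqrt ((‖q - p‖ / v + v / (2 * u)) ^ 2) :=
              Real.sqrt_le_sqrt hq2
          _ = ‖q - p‖ / v + v / (2 * u) := Real.sqrt_sq hR
      have h2 : Real.sqrt (3 * ‖q - p‖ / u) ≤ 2 * Real.sqrt (2 * ‖q - p‖ / u) := by
        have hr := Real.sq_sqrt (show (0:ℝ) ≤ 2 * ‖q - p‖ / u by positivity)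
        have h6 : 2 * ‖q - p‖ / u = 2 * (‖q - p‖ / u) := by ring
        have h7 : 3 * ‖q - p‖ / u = 3 * (‖q - p‖ / u) := by ring
        have hq3 : 3 * ‖q - p‖ / u ≤ (2 * Real.sqrt (2 * ‖q - p‖ / u)) ^ 2 := by
          nlinarith [hr, h6, h7, (div_pos h0 hu).le]
        calc Real.sqrt (3 * ‖q - p‖ / u)
            ≤ Real.sqrt ((2 * Real.sqrt (2 * ‖q - p‖ / u)) ^ 2) := Real.sqrt_le_sqrt hq3
          _ = 2 * Real.sqrt (2 * ‖q - p‖ / u) := Real.sqrt_sq (by positivity)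
      have h3 : Real.sqrt (2 * ‖q - p‖ / u) ≤ Real.sqrt (2 * DD / u) := by
        apply Real.sqrt_le_sqrt
        gcongr
      rw [hdpq]
      linarith
    · -- long case : T₁ = 3v/(2u)
      have hT₁ : (0:ℝ) < 3 * v / (2 * u) := by positivity
      have hVeq : 2 * u * (3 * v / (2 * u)) / 3 = v := by field_simp
      have hVle : 2 * u * (3 * v / (2 * u)) / 3 ≤ v := hVeq.le
      have h1 : (3 * v / (2 * u)) ^ 2 ≤ 3 * ‖q - p‖ / u :=
        (Real.le_sqrt (by positivity) (by positivity)).mp hmin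
      have h1' : 9 * v ^ 2 * u ≤ 12 * ‖q - p‖ * u ^ 2 := by
        rw [div_pow, div_le_div_iff₀ (by positivity) hu] at h1
        nlinarith [h1]
      have hd₁ : u * (3 * v / (2 * u)) ^ 2 / 3 ≤ ‖q - p‖ := by
        have he1 : u * (3 * v / (2 * u)) ^ 2 / 3 = 3 * v ^ 2 / (4 * u) := by field_simp; ring
        rw [he1, div_le_iff₀ (by positivity : (0:ℝ) < 4 * u)]
        nlinarith [h1', hu, mul_pos hu hu]
      refine ⟨_, mem_Sset_of v u _ hv hu hT₁ p q h0 hVle hd₁, ?_⟩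
      have hTeq : 3 * v / (2 * u) + (‖q - p‖ - u * (3 * v / (2 * u)) ^ 2 / 3)
            / (2 * u * (3 * v / (2 * u)) / 3)
          = ‖q - p‖ / v + v / (2 * u) + v / (4 * u) := by
        rw [hVeq]
        field_simp
        ring
      rw [hTeq, hdpq]
      have hle : v / (4 * u) ≤ Real.sqrt (2 * DD / u) := by
        have hsq2 : (v / (4 * u)) ^ 2 ≤ 2 * DD / u := by
          rw [div_pow, div_le_div_iff₀ (by positivity) hu]
          nlinarith [h1', hDDd, hu, mul_pos hu hu,
            mul_le_mul_of_nonneg_left hDDd (by positivity : (0:ℝ) ≤ u ^ 2)]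
        calc v / (4 * u) = Real.sqrt ((v / (4 * u)) ^ 2) :=
              (Real.sqrt_sq (by positivity)).symm
          _ ≤ Real.sqrt (2 * DD / u) := Real.sqrt_le_sqrt hsq2
      linarith

lemma Sset_nonempty (v u : ℝ) (hv : 0 < v) (hu : 0 < u) (p q : Plane) :
    (Sset v u p q).Nonempty := by
  obtain ⟨T, hT, _⟩ := exists_good_T v u hv hu p q ‖p - q‖ le_rfl
  exact ⟨T, hT⟩

lemma Sset_bddBelow (v u : ℝ) (p q : Plane) : BddBelow (Sset v u p q) :=
  ⟨0, fun T hT => hT.1⟩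

lemma tau_nonneg (v u : ℝ) (hv : 0 < v) (hu : 0 < u) (p q : Plane) :
    0 ≤ tauDI v u p 0 q :=
  le_csInf (Sset_nonempty v u hv hu p q) fun T hT => hT.1

lemma tau_le_bound (v u : ℝ) (hv : 0 < v) (hu : 0 < u) (p q : Plane) (DD : ℝ)
    (hDD : ‖p - q‖ ≤ DD) :
    tauDI v u p 0 q ≤ ‖p - q‖ / v + v / (2 * u) + Real.sqrt (2 * DD / u) := by
  obtain ⟨T, hT, hTle⟩ := exists_good_T v u hv hu p q DD hDD
  exact le_trans (csInf_le (Sset_bddBelow v u p q) hT) hTle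

lemma tau_ge (v u : ℝ) (hv : 0 < v) (hu : 0 < u) (p q : Plane) :
    ‖p - q‖ / v ≤ tauDI v u p 0 q := by
  apply le_csInf (Sset_nonempty v u hv hu p q)
  rintro T ⟨hT0, x, hx, hx0, hdx0, hxT⟩
  have hdiff : Differentiable ℝ x := hx.1.differentiable (by norm_num)
  have hlip : LipschitzWith v.toNNReal x := by
    apply lipschitzWith_of_nnnorm_deriv_le hdiff
    intro t
    rw [← NNReal.coe_le_coe, coe_nnnorm, Real.coe_toNNReal _ hv.le]
    exact hx.2.1 t
  have hle := hlip.dist_le_mul T 0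
  rw [hx0, hxT, Real.coe_toNNReal _ hv.le, Real.dist_eq, sub_zero, abs_of_nonneg hT0,
    dist_eq_norm] at hle
  rw [div_le_iff₀ hv, norm_sub_rev]
  linarith

lemma contDiff_one_deriv {x : ℝ → Plane} (h : ContDiff ℝ 2 x) : ContDiff ℝ 1 (deriv x) := by
  have h2 : (2 : WithTop ℕ∞) = 1 + 1 := by norm_num
  rw [h2, contDiff_succ_iff_deriv] at h
  exact h.2.2

lemma dilate (v u σ : ℝ) (hv : 0 ≤ v) (hu : 0 ≤ u) (hσ0 : 0 ≤ σ) (hσ1 : σ ≤ 1)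
    (x : ℝ → Plane) (hx : IsDITraj v u x) :
    IsDITraj v u (fun t => x (σ * t)) ∧
      (∀ t, deriv (fun t => x (σ * t)) t = σ • deriv x (σ * t)) := by
  have hdiff : Differentiable ℝ x := hx.1.differentiable (by norm_num)
  have hcd : ContDiff ℝ 1 (deriv x) := contDiff_one_deriv hx.1
  have hdiffd : Differentiable ℝ (deriv x) := hcd.differentiable one_ne_zero
  have hlin : ∀ t : ℝ, HasDerivAt (fun s : ℝ => σ * s) σ t := fun t => by
    simpa using (hasDerivAt_id t).const_mul σ
  have hy' : ∀ t, HasDerivAt (fun s => x (σ * s)) (σ • deriv x (σ * t)) t := fun t =>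
    HasDerivAt.scomp t (hdiff (σ * t)).hasDerivAt (hlin t)
  have hyderiv : deriv (fun s => x (σ * s)) = fun t => σ • deriv x (σ * t) :=
    funext fun t => (hy' t).deriv
  have hy'' : ∀ t, HasDerivAt (fun s => σ • deriv x (σ * s))
      (σ • (σ • deriv (deriv x) (σ * t))) t := fun t =>
    (HasDerivAt.scomp t (hdiffd (σ * t)).hasDerivAt (hlin t)).const_smul σ
  have habs : |σ| = σ := abs_of_nonneg hσ0
  refine ⟨⟨?_, ?_, ?_⟩, fun t => (hy' t).deriv⟩
  · exact hx.1.comp ((contDiff_const.mul contDiff_id : ContDiff ℝ 2 fun s : ℝ => σ * s))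
  · intro t
    rw [hyderiv]
    simp only [norm_smul, Real.norm_eq_abs, habs]
    calc σ * ‖deriv x (σ * t)‖ ≤ 1 * v := by
          apply mul_le_mul hσ1 (hx.2.1 _) (norm_nonneg _) zero_le_one
      _ = v := one_mul v
  · intro t
    rw [hyderiv]
    have hder : deriv (fun t => σ • deriv x (σ * t))
        = fun t => σ • (σ • deriv (deriv x) (σ * t)) := funext fun t => (hy'' t).deriv
    rw [hder]
    simp only [norm_smul, Real.norm_eq_abs, habs]
    calc σ * (σ * ‖deriv (deriv x) (σ * t)‖) ≤ 1 * (1 * u) := by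
          apply mul_le_mul hσ1 _ (by positivity) zero_le_one
          apply mul_le_mul hσ1 (hx.2.2 _) (norm_nonneg _) zero_le_one
      _ = u := by ring

lemma combo (v u θ₁ θ₂ : ℝ) (hθ1 : 0 ≤ θ₁) (hθ2 : 0 ≤ θ₂) (hsum : θ₁ + θ₂ = 1)
    (y₁ y₂ : ℝ → Plane) (h1 : IsDITraj v u y₁) (h2 : IsDITraj v u y₂) :
    IsDITraj v u (fun t => θ₁ • y₁ t + θ₂ • y₂ t) ∧
      (∀ t, deriv (fun t => θ₁ • y₁ t + θ₂ • y₂ t) t = θ₁ • deriv y₁ t + θ₂ • deriv y₂ t) := by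
  have hd1 : Differentiable ℝ y₁ := h1.1.differentiable (by norm_num)
  have hd2 : Differentiable ℝ y₂ := h2.1.differentiable (by norm_num)
  have hcd1 : Differentiable ℝ (deriv y₁) := (contDiff_one_deriv h1.1).differentiable one_ne_zero
  have hcd2 : Differentiable ℝ (deriv y₂) := (contDiff_one_deriv h2.1).differentiable one_ne_zero
  have hz' : ∀ t, HasDerivAt (fun t => θ₁ • y₁ t + θ₂ • y₂ t)
      (θ₁ • deriv y₁ t + θ₂ • deriv y₂ t) t := fun t =>
    (((hd1 t).hasDerivAt.const_smul θ₁).add ((hd2 t).hasDerivAt.const_smul θ₂))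
  have hzderiv : deriv (fun t => θ₁ • y₁ t + θ₂ • y₂ t)
      = fun t => θ₁ • deriv y₁ t + θ₂ • deriv y₂ t := funext fun t => (hz' t).deriv
  have hz'' : ∀ t, HasDerivAt (fun t => θ₁ • deriv y₁ t + θ₂ • deriv y₂ t)
      (θ₁ • deriv (deriv y₁) t + θ₂ • deriv (deriv y₂) t) t := fun t =>
    (((hcd1 t).hasDerivAt.const_smul θ₁).add ((hcd2 t).hasDerivAt.const_smul θ₂))
  have hbnd : ∀ (w₁ w₂ : Plane) (C : ℝ), ‖w₁‖ ≤ C → ‖w₂‖ ≤ C →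
      ‖θ₁ • w₁ + θ₂ • w₂‖ ≤ C := by
    intro w₁ w₂ C hw1 hw2
    calc ‖θ₁ • w₁ + θ₂ • w₂‖ ≤ ‖θ₁ • w₁‖ + ‖θ₂ • w₂‖ := norm_add_le _ _
      _ = θ₁ * ‖w₁‖ + θ₂ * ‖w₂‖ := by
          rw [norm_smul, norm_smul, Real.norm_eq_abs, Real.norm_eq_abs,
            abs_of_nonneg hθ1, abs_of_nonneg hθ2]
      _ ≤ θ₁ * C + θ₂ * C :=
          add_le_add (mul_le_mul_of_nonneg_left hw1 hθ1) (mul_le_mul_of_nonneg_left hw2 hθ2)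
      _ = C := by rw [← add_mul, hsum, one_mul]
  refine ⟨⟨?_, ?_, ?_⟩, fun t => (hz' t).deriv⟩
  · exact ((contDiff_const (c := θ₁)).smul h1.1).add ((contDiff_const (c := θ₂)).smul h2.1)
  · intro t
    rw [hzderiv]
    exact hbnd _ _ v (h1.2.1 t) (h2.2.1 t)
  · intro t
    rw [hzderiv]
    have hder : deriv (fun t => θ₁ • deriv y₁ t + θ₂ • deriv y₂ t)
        = fun t => θ₁ • deriv (deriv y₁) t + θ₂ • deriv (deriv y₂) t :=
      funext fun t => (hz'' t).deriv
    rw [hder]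
    exact hbnd _ _ u (h1.2.2 t) (h2.2.2 t)

lemma convex_sublevel (v u : ℝ) (hv : 0 < v) (hu : 0 < u) (p : Plane) (c : ℝ) :
    Convex ℝ {q : Plane | tauDI v u p 0 q ≤ c} := by
  rintro q₁ hq₁ q₂ hq₂ θ₁ θ₂ hθ1 hθ2 hsum
  simp only [Set.mem_setOf_eq] at hq₁ hq₂ ⊢
  apply le_of_forall_pos_le_add
  intro ε hε
  have hc0 : 0 ≤ c := le_trans (tau_nonneg v u hv hu p q₁) hq₁
  have hTpos : 0 < c + ε := by positivity
  have hget : ∀ q' : Plane, tauDI v u p 0 q' ≤ c →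
      ∃ T' ∈ Sset v u p q', T' < c + ε := by
    intro q' hq'
    have hlt : sInf (Sset v u p q') < c + ε := lt_of_le_of_lt hq' (by linarith)
    exact (csInf_lt_iff (Sset_bddBelow v u p q') (Sset_nonempty v u hv hu p q')).mp hlt
  obtain ⟨T₁', hT₁'mem, hT₁'lt⟩ := hget q₁ hq₁
  obtain ⟨T₂', hT₂'mem, hT₂'lt⟩ := hget q₂ hq₂
  obtain ⟨hT₁'0, x₁, hx₁, hx₁0, hdx₁0, hx₁T⟩ := hT₁'mem
  obtain ⟨hT₂'0, x₂, hx₂, hx₂0, hdx₂0, hx₂T⟩ := hT₂'mem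
  have hσ₁0 : 0 ≤ T₁' / (c + ε) := div_nonneg hT₁'0 hTpos.le
  have hσ₂0 : 0 ≤ T₂' / (c + ε) := div_nonneg hT₂'0 hTpos.le
  have hσ₁1 : T₁' / (c + ε) ≤ 1 := (div_le_one hTpos).mpr hT₁'lt.le
  have hσ₂1 : T₂' / (c + ε) ≤ 1 := (div_le_one hTpos).mpr hT₂'lt.le
  obtain ⟨hy₁, hdy₁⟩ := dilate v u _ hv.le hu.le hσ₁0 hσ₁1 x₁ hx₁
  obtain ⟨hy₂, hdy₂⟩ := dilate v u _ hv.le hu.le hσ₂0 hσ₂1 x₂ hx₂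
  obtain ⟨hz, hdz⟩ := combo v u θ₁ θ₂ hθ1 hθ2 hsum _ _ hy₁ hy₂
  have hmem : c + ε ∈ Sset v u p (θ₁ • q₁ + θ₂ • q₂) := by
    refine ⟨hTpos.le, _, hz, ?_, ?_, ?_⟩
    · show θ₁ • x₁ (T₁' / (c + ε) * 0) + θ₂ • x₂ (T₂' / (c + ε) * 0) = p
      simp only [mul_zero]
      rw [hx₁0, hx₂0, ← add_smul, hsum, one_smul]
    · rw [hdz 0, hdy₁ 0, hdy₂ 0]
      simp only [mul_zero]
      rw [hdx₁0, hdx₂0]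
      simp
    · show θ₁ • x₁ (T₁' / (c + ε) * (c + ε)) + θ₂ • x₂ (T₂' / (c + ε) * (c + ε))
          = θ₁ • q₁ + θ₂ • q₂
      rw [div_mul_cancel₀ _ (ne_of_gt hTpos), div_mul_cancel₀ _ (ne_of_gt hTpos), hx₁T, hx₂T]
  exact csInf_le (Sset_bddBelow v u p _) hmem



lemma tau_aemeasurable (v u : ℝ) (hv : 0 < v) (hu : 0 < u) (p : Plane) :
    AEMeasurable (fun q => tauDI v u p 0 q) (volume : Measure Plane) := by
  have h1 : @Measurable (NullMeasurableSpace Plane volume) ℝ _ _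
      (fun q => tauDI v u p 0 q) := by
    apply measurable_of_Iic
    intro c
    exact (convex_sublevel v u hv hu p c).nullMeasurableSet volume
  exact NullMeasurable.aemeasurable h1

lemma ciInf_eq_inf' {ι : Type*} [Fintype ι] [Nonempty ι] (f : ι → ℝ) :
    (⨅ i, f i) = Finset.univ.inf' Finset.univ_nonempty f := by
  apply le_antisymm
  · obtain ⟨i, -, hi⟩ := Finset.exists_mem_eq_inf' (Finset.univ_nonempty (α := ι)) f
    rw [hi]
    exact ciInf_le (Finite.bddBelow_range f) i
  · exact le_ciInf fun i => Finset.inf'_le f (Finset.mem_univ i)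

lemma aemeasurable_inf' {ι : Type*} {α : Type*} [MeasurableSpace α] {μ : Measure α}
    (s : Finset ι) (hs : s.Nonempty) (f : ι → α → ℝ) (hf : ∀ i, AEMeasurable (f i) μ) :
    AEMeasurable (fun q => s.inf' hs fun i => f i q) μ := by
  induction hs using Finset.Nonempty.cons_induction with
  | singleton a => simpa using hf a
  | cons a s ha hs ih =>
      have heq : (fun q => (Finset.cons a s ha).inf' (Finset.cons_nonempty ha) fun i => f i q)
          = fun q => min (f a q) (s.inf' hs fun i => f i q) := by
        funext q
        rw [Finset.inf'_cons]
      rw [heq]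
      exact (hf a).min ih

lemma aemeasurable_iInf {ι : Type*} [Fintype ι] [Nonempty ι] {α : Type*} [MeasurableSpace α]
    {μ : Measure α} (f : ι → α → ℝ) (hf : ∀ i, AEMeasurable (f i) μ) :
    AEMeasurable (fun q => ⨅ i, f i q) μ := by
  have heq : (fun q => ⨅ i, f i q)
      = fun q => Finset.univ.inf' Finset.univ_nonempty fun i => f i q :=
    funext fun q => ciInf_eq_inf' _
  rw [heq]
  exact aemeasurable_inf' _ _ f hf


end DIAux

open DIAux in
/-- bounds on the coverage cost of the Median Stationing algorithm for DI
robots in a square `Q` of area `A = a²`: if `p*` is an `m`-median configuration, then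
`H*_m(Q)/v_max ≤ T_MS^DI ≤ H*_m(Q)/v_max + v_max/(2 u_max) + √(2√(2A)/u_max)`. -/
theorem di_median_stationing_bounds
    (vmax umax a : ℝ) (hvmax : 0 < vmax) (humax : 0 < umax) (ha : 0 < a) (b₁ b₂ : ℝ)
    (m : ℕ) (hm : 0 < m) (pstar : Fin m → Plane) :
    let A : ℝ := a ^ 2
    let Q : Set Plane := {q | q 0 ∈ Set.Icc b₁ (b₁ + a) ∧ q 1 ∈ Set.Icc b₂ (b₂ + a)}
    let H : (Fin m → Plane) → ℝ := fun ps => (1 / A) * ∫ q in Q, ⨅ i, ‖ps i - q‖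
    let TMS : ℝ := (1 / A) * ∫ q in Q, ⨅ i, tauDI vmax umax (pstar i) 0 q
    (∀ i, pstar i ∈ Q) →
    (∀ ps : Fin m → Plane, (∀ i, ps i ∈ Q) → H pstar ≤ H ps) →
    H pstar / vmax ≤ TMS ∧
      TMS ≤ H pstar / vmax + vmax / (2 * umax) +
        Real.sqrt (2 * Real.sqrt (2 * A) / umax) := by
  intro A Q H TMS hmemQ _
  haveI : Nonempty (Fin m) := ⟨⟨0, hm⟩⟩
  have hAeq : A = a ^ 2 := rfl
  have hA : (0 : ℝ) < A := by rw [hAeq]; positivity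
  have hQmeas : MeasurableSet Q := by
    have hme := (MeasurableEquiv.toLp 2 (Fin 2 → ℝ)).symm.measurable
    have h0 : Measurable fun q : Plane => q 0 := (measurable_pi_apply 0).comp hme
    have h1 : Measurable fun q : Plane => q 1 := (measurable_pi_apply 1).comp hme
    exact (h0 measurableSet_Icc).inter (h1 measurableSet_Icc)
  have hQvol : volume Q = ENNReal.ofReal A := by
    have hQpi : Q = (MeasurableEquiv.toLp 2 (Fin 2 → ℝ)).symm ⁻¹'
        (Set.univ.pi fun i => Set.Icc (![b₁, b₂] i) (![b₁, b₂] i + a)) := by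
      ext q
      simp only [Set.mem_preimage, Set.mem_pi, Set.mem_univ, forall_true_left, Set.mem_setOf_eq,
        Fin.forall_fin_two]
      rfl
    rw [hQpi,
      (EuclideanSpace.volume_preserving_symm_measurableEquiv_toLp (Fin 2)).measure_preimage
        ((MeasurableSet.univ_pi fun i => measurableSet_Icc).nullMeasurableSet)]
    rw [volume_pi_pi, Fin.prod_univ_two]
    simp only [Real.volume_Icc, add_sub_cancel_left]
    rw [← ENNReal.ofReal_mul ha.le, hAeq, sq]
  have hdiam : ∀ p' ∈ Q, ∀ q' ∈ Q, ‖p' - q'‖ ≤ Real.sqrt (2 * A) := by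
    intro p' hp q' hq
    obtain ⟨⟨hp01, hp02⟩, hp11, hp12⟩ := hp
    obtain ⟨⟨hq01, hq02⟩, hq11, hq12⟩ := hq
    rw [EuclideanSpace.norm_eq, Fin.sum_univ_two]
    apply Real.sqrt_le_sqrt
    have e0 : (p' - q') 0 = p' 0 - q' 0 := rfl
    have e1 : (p' - q') 1 = p' 1 - q' 1 := rfl
    rw [e0, e1, Real.norm_eq_abs, Real.norm_eq_abs, hAeq]
    have h0 : |p' 0 - q' 0| ≤ a := abs_le.mpr ⟨by linarith, by linarith⟩
    have h1 : |p' 1 - q' 1| ≤ a := abs_le.mpr ⟨by linarith, by linarith⟩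
    nlinarith [abs_nonneg (p' 0 - q' 0), abs_nonneg (p' 1 - q' 1), sq_abs (p' 0 - q' 0),
      sq_abs (p' 1 - q' 1)]
  have hD0 : (0 : ℝ) ≤ Real.sqrt (2 * A) := Real.sqrt_nonneg _
  have hf0 : ∀ q : Plane, 0 ≤ (⨅ i, ‖pstar i - q‖) :=
    fun q => le_ciInf fun i => norm_nonneg _
  have hfD : ∀ q ∈ Q, (⨅ i, ‖pstar i - q‖) ≤ Real.sqrt (2 * A) := fun q hq =>
    le_trans (ciInf_le (Finite.bddBelow_range _) ⟨0, hm⟩) (hdiam _ (hmemQ _) _ hq)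
  have hg0 : ∀ q : Plane, 0 ≤ (⨅ i, tauDI vmax umax (pstar i) 0 q) :=
    fun q => le_ciInf fun i => tau_nonneg vmax umax hvmax humax _ q
  have hfg : ∀ q ∈ Q,
      (⨅ i, ‖pstar i - q‖) / vmax ≤ ⨅ i, tauDI vmax umax (pstar i) 0 q := by
    intro q _
    apply le_ciInf
    intro i
    calc (⨅ i, ‖pstar i - q‖) / vmax ≤ ‖pstar i - q‖ / vmax := by
          gcongr
          exact ciInf_le (Finite.bddBelow_range _) i
      _ ≤ tauDI vmax umax (pstar i) 0 q := tau_ge vmax umax hvmax humax _ q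
  have hgK : ∀ q ∈ Q, (⨅ i, tauDI vmax umax (pstar i) 0 q)
      ≤ (⨅ i, ‖pstar i - q‖) / vmax + (vmax / (2 * umax)
        + Real.sqrt (2 * Real.sqrt (2 * A) / umax)) := by
    intro q hq
    obtain ⟨i₀, -, hi₀⟩ := Finset.exists_mem_eq_inf' (Finset.univ_nonempty (α := Fin m))
      (fun i => ‖pstar i - q‖)
    have hmin : (⨅ i, ‖pstar i - q‖) = ‖pstar i₀ - q‖ := by
      rw [ciInf_eq_inf']; exact hi₀
    calc (⨅ i, tauDI vmax umax (pstar i) 0 q) ≤ tauDI vmax umax (pstar i₀) 0 q :=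
          ciInf_le (Finite.bddBelow_range _) i₀
      _ ≤ ‖pstar i₀ - q‖ / vmax + vmax / (2 * umax)
            + Real.sqrt (2 * Real.sqrt (2 * A) / umax) :=
          tau_le_bound vmax umax hvmax humax _ q _ (hdiam _ (hmemQ i₀) _ hq)
      _ = (⨅ i, ‖pstar i - q‖) / vmax + (vmax / (2 * umax)
            + Real.sqrt (2 * Real.sqrt (2 * A) / umax)) := by rw [hmin]; ring
  have hgD : ∀ q ∈ Q, (⨅ i, tauDI vmax umax (pstar i) 0 q)
      ≤ Real.sqrt (2 * A) / vmax + (vmax / (2 * umax)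
        + Real.sqrt (2 * Real.sqrt (2 * A) / umax)) := by
    intro q hq
    refine le_trans (hgK q hq) ?_
    gcongr
    exact hfD q hq
  have hQfin : volume Q < ⊤ := by rw [hQvol]; exact ENNReal.ofReal_lt_top
  have hfae : AEMeasurable (fun q => ⨅ i, ‖pstar i - q‖) (volume.restrict Q) :=
    (aemeasurable_iInf _ fun i =>
      ((continuous_const.sub continuous_id).norm).aemeasurable).restrict
  have hgae : AEMeasurable (fun q => ⨅ i, tauDI vmax umax (pstar i) 0 q)
      (volume.restrict Q) :=
    (aemeasurable_iInf _ fun i => tau_aemeasurable vmax umax hvmax humax (pstar i)).restrict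
  have hintf : IntegrableOn (fun q => ⨅ i, ‖pstar i - q‖) Q volume := by
    apply Integrable.mono' (integrableOn_const (C := Real.sqrt (2 * A)) hQfin.ne) hfae.aestronglyMeasurable
    filter_upwards [ae_restrict_mem hQmeas] with q hq
    rw [Real.norm_eq_abs, abs_of_nonneg (hf0 q)]
    exact hfD q hq
  have hintg : IntegrableOn (fun q => ⨅ i, tauDI vmax umax (pstar i) 0 q) Q volume := by
    apply Integrable.mono' (integrableOn_const (C := Real.sqrt (2 * A) / vmax + (vmax / (2 * umax)
      + Real.sqrt (2 * Real.sqrt (2 * A) / umax))) hQfin.ne) hgae.aestronglyMeasurable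
    filter_upwards [ae_restrict_mem hQmeas] with q hq
    rw [Real.norm_eq_abs, abs_of_nonneg (hg0 q)]
    exact hgD q hq
  have hintfd : IntegrableOn (fun q => (⨅ i, ‖pstar i - q‖) / vmax) Q volume :=
    hintf.div_const vmax
  have hintK : IntegrableOn (fun _ : Plane => vmax / (2 * umax)
      + Real.sqrt (2 * Real.sqrt (2 * A) / umax)) Q volume :=
    integrableOn_const hQfin.ne
  have I1 : ∫ q in Q, (⨅ i, ‖pstar i - q‖) / vmax
      ≤ ∫ q in Q, ⨅ i, tauDI vmax umax (pstar i) 0 q :=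
    setIntegral_mono_on hintfd hintg hQmeas hfg
  have I2 : (∫ q in Q, ⨅ i, tauDI vmax umax (pstar i) 0 q)
      ≤ ∫ q in Q, ((⨅ i, ‖pstar i - q‖) / vmax + (vmax / (2 * umax)
        + Real.sqrt (2 * Real.sqrt (2 * A) / umax))) :=
    setIntegral_mono_on hintg (hintfd.add hintK) hQmeas hgK
  have hIv : ∫ q in Q, (⨅ i, ‖pstar i - q‖) / vmax
      = (∫ q in Q, ⨅ i, ‖pstar i - q‖) / vmax := integral_div _ _
  have hsplit : ∫ q in Q, ((⨅ i, ‖pstar i - q‖) / vmax + (vmax / (2 * umax)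
        + Real.sqrt (2 * Real.sqrt (2 * A) / umax)))
      = (∫ q in Q, ⨅ i, ‖pstar i - q‖) / vmax + A * (vmax / (2 * umax)
        + Real.sqrt (2 * Real.sqrt (2 * A) / umax)) := by
    rw [integral_add hintfd hintK, hIv, setIntegral_const, measureReal_def, hQvol,
      ENNReal.toReal_ofReal hA.le, smul_eq_mul]
  constructor
  · show ((1 / A) * ∫ q in Q, ⨅ i, ‖pstar i - q‖) / vmax
      ≤ (1 / A) * ∫ q in Q, ⨅ i, tauDI vmax umax (pstar i) 0 q
    rw [mul_div_assoc]
    apply mul_le_mul_of_nonneg_left _ (by positivity : (0:ℝ) ≤ 1 / A)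
    rw [← hIv]
    exact I1
  · show (1 / A) * (∫ q in Q, ⨅ i, tauDI vmax umax (pstar i) 0 q)
      ≤ ((1 / A) * ∫ q in Q, ⨅ i, ‖pstar i - q‖) / vmax + vmax / (2 * umax) +
        Real.sqrt (2 * Real.sqrt (2 * A) / umax)
    have hIg : (∫ q in Q, ⨅ i, tauDI vmax umax (pstar i) 0 q)
        ≤ (∫ q in Q, ⨅ i, ‖pstar i - q‖) / vmax + A * (vmax / (2 * umax)
          + Real.sqrt (2 * Real.sqrt (2 * A) / umax)) := le_trans I2 hsplit.le
    calc (1 / A) * (∫ q in Q, ⨅ i, tauDI vmax umax (pstar i) 0 q)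
        ≤ (1 / A) * ((∫ q in Q, ⨅ i, ‖pstar i - q‖) / vmax + A * (vmax / (2 * umax)
          + Real.sqrt (2 * Real.sqrt (2 * A) / umax))) :=
          mul_le_mul_of_nonneg_left hIg (by positivity)
      _ = ((1 / A) * ∫ q in Q, ⨅ i, ‖pstar i - q‖) / vmax + vmax / (2 * umax) +
          Real.sqrt (2 * Real.sqrt (2 * A) / umax) := by
          field_simp
          ring
end
end
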